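/- arXiv:1308.4462 — 2 statements merged into one kernel-verified Lean document; each statement's English description precedes it below -/
import Mathlib

section
/- Assume (B2) and let (η,h,λ) be the eigen-triple of Proposition 2, so that Q^ω(h(zω,·))(x) = λ_ω·h(ω,x) for all (ω,x). Then for every ω ∈ Ω, all integers m₁, m₂ ≥ 1 and every admissible x ∈ E^{m₁}: ∫_{E^{m₂}} 𝐐^{m₁,m₂}(ω,x,du)·𝐡^{m₂}(zω,u) = λ_ω·𝐡^{m₁}(ω,x), where 𝐡^m(ω,x) = (1/m)Σ_{j=1}^m h(ω,x^j); that is, the additive average 𝐡 is an eigenfunction of the particle kernel 𝐐 with the same eigenvalue λ_ω. -/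
open MeasureTheory ENNReal Filter Topology

noncomputable section

/-- The environment space `Ω = H^ℤ`. -/
abbrev Env (H : Type*) := ℤ → H

/-- The shift operator `z`: `(zω)(n) = ω(n+1)`. -/
def shift {H : Type*} (ω : Env H) : Env H := fun n => ω (n + 1)

/-- The inverse shift `z⁻¹`: `(z⁻¹ω)(n) = ω(n-1)`. -/
def shiftInv {H : Type*} (ω : Env H) : Env H := fun n => ω (n - 1)

/-- Iterates `z^{-k}` of the inverse shift. -/
def zitInv {H : Type*} : ℕ → Env H → Env H
  | 0, ω => ω
  | n + 1, ω => shiftInv (zitInv n ω)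

variable {H E : Type*} [MeasurableSpace H] [MeasurableSpace E]

/-- Iterates `z^k` of the shift. -/
def zit {H : Type*} : ℕ → Env H → Env H
  | 0, ω => ω
  | n + 1, ω => shift (zit n ω)

/-- The sub-Markov kernel `Q^ω(x,dx') = W(ω,x) M^ω(x,dx')`. -/
def Qk (M : Env H → E → Measure E) (W : Env H → E → ℝ) (ω : Env H) (x : E) :
    Measure E := ENNReal.ofReal (W ω x) • M ω x

/-- The compositions `Q_n^ω = Q^ω Q^{zω} ⋯ Q^{z^{n-1}ω}` (with `Q_0` the identity). -/
def Qn (M : Env H → E → Measure E) (W : Env H → E → ℝ) :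
    ℕ → Env H → E → Measure E
  | 0, _, x => Measure.dirac x
  | n + 1, ω, x => (Qn M W n ω x).bind (Qk M W (zit n ω))

/-- The total mass `σ Q_n^ω(1)`. -/
def QnMass (M : Env H → E → Measure E) (W : Env H → E → ℝ)
    (n : ℕ) (ω : Env H) (σ : Measure E) : ℝ≥0∞ :=
  (σ.bind (Qn M W n ω)) Set.univ

/-- `Φ_n^ω(σ)(A) = σQ_n^ω(A) / σQ_n^ω(1)`. -/
def PhiSet (M : Env H → E → Measure E) (W : Env H → E → ℝ)
    (n : ℕ) (ω : Env H) (σ : Measure E) (A : Set E) : ℝ≥0∞ :=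
  (σ.bind (Qn M W n ω)) A / QnMass M W n ω σ

/-- `Φ_n^ω(σ)(φ)` for a `ℝ≥0∞`-valued function `φ`. -/
def PhiFun (M : Env H → E → Measure E) (W : Env H → E → ℝ)
    (n : ℕ) (ω : Env H) (σ : Measure E) (φ : E → ℝ≥0∞) : ℝ≥0∞ :=
  (∫⁻ y, φ y ∂(σ.bind (Qn M W n ω))) / QnMass M W n ω σ

/-- The ratio `Q_n^ω(1)(x) / Φ_n^{z^{-n}ω}(σ)(Q_n^ω(1))` whose limit defines `h(ω,x)`. -/
def ratioH (M : Env H → E → Measure E) (W : Env H → E → ℝ) (σ : Measure E)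
    (n : ℕ) (ω : Env H) (x : E) : ℝ≥0∞ :=
  (Qn M W n ω x) Set.univ /
    PhiFun M W n (zitInv n ω) σ (fun y => (Qn M W n ω y) Set.univ)

/-- Admissibility of a particle configuration: positive total weight. -/
def Adm (W : Env H → E → ℝ) (ω : Env H) {m : ℕ} (x : Fin m → E) : Prop :=
  0 < ∑ j, W ω (x j)

/-- The average weight `𝐖^m(ω,x) = (1/m) Σ_j W(ω,x^j)`. -/
def Wavg (W : Env H → E → ℝ) (ω : Env H) {m : ℕ} (x : Fin m → E) : ℝ :=
  (∑ j, W ω (x j)) / m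

/-- The weighted mixture `Σ_j W(ω,x^j) M^ω(x^j,·) / Σ_j W(ω,x^j)`. -/
def mixK (M : Env H → E → Measure E) (W : Env H → E → ℝ) (ω : Env H)
    {m : ℕ} (x : Fin m → E) : Measure E :=
  (ENNReal.ofReal (∑ j, W ω (x j)))⁻¹ •
    ∑ j, ENNReal.ofReal (W ω (x j)) • M ω (x j)

/-- The particle transition kernel `𝐌^{m₁,m₂}(ω,x,·)`, the `m₂`-fold product of
the weighted mixture. -/
def Mpart (M : Env H → E → Measure E) (W : Env H → E → ℝ) (m₂ : ℕ) (ω : Env H)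
    {m₁ : ℕ} (x : Fin m₁ → E) : Measure (Fin m₂ → E) :=
  Measure.pi fun _ => mixK M W ω x

/-- The additive average `𝐡^m(ω,x) = (1/m) Σ_j h(ω,x^j)`. -/
def havg (h : Env H → E → ℝ) (ω : Env H) {m : ℕ} (x : Fin m → E) : ℝ :=
  (∑ j, h ω (x j)) / m

private lemma map_eval_pi_aux {ι : Type*} [Fintype ι] [DecidableEq ι] {α : ι → Type*}
    [∀ i, MeasurableSpace (α i)] (μ : ∀ i, Measure (α i))
    [∀ i, IsProbabilityMeasure (μ i)] (i : ι) :
    (Measure.pi μ).map (fun f => f i) = μ i := by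
  ext A hA
  rw [Measure.map_apply (measurable_pi_apply i) hA]
  have : Function.eval i ⁻¹' A = Set.pi Set.univ (Function.update (fun j => (Set.univ : Set (α j))) i A) := by
    rw [Set.univ_pi_update_univ]
  rw [this, Measure.pi_pi]
  refine (Finset.prod_eq_single i (fun j _ hj => ?_) (fun hni => absurd (Finset.mem_univ i) hni)).trans ?_
  · rw [Function.update_of_ne hj]; exact measure_univ
  · rw [Function.update_self]

/-- **Lemma 3 (particle eigenfunction).** Assume (B2) and let `(η,h,λ)` be the
eigen-triple of Proposition 2 (so `Q^ω(h(zω,·))(x) = λ_ω·h(ω,x)`). Then for every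
`ω`, all `m₁, m₂ ≥ 1` and every admissible `x ∈ E^{m₁}`,
`∫ 𝐐^{m₁,m₂}(ω,x,du)·𝐡^{m₂}(zω,u) = λ_ω·𝐡^{m₁}(ω,x)`, where
`𝐐^{m₁,m₂}(ω,x,·) = 𝐖^{m₁}(ω,x)·𝐌^{m₁,m₂}(ω,x,·)`. -/
theorem lemma3_particle_eigenfunction
    (M : Env H → E → Measure E) (W : Env H → E → ℝ)
    (hMprob : ∀ ω x, IsProbabilityMeasure (M ω x))
    (hMmeas : Measurable fun p : Env H × E => M p.1 p.2)
    (hWmeas : Measurable fun p : Env H × E => W p.1 p.2)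
    (hWnn : ∀ ω x, 0 ≤ W ω x) (CW : ℝ) (hWbdd : ∀ ω x, W ω x ≤ CW)
    -- (B2)
    (Δ1 : ℝ) (hΔ1 : 0 < Δ1)
    (hB2a : ∀ ω x u, ∫⁻ y, ENNReal.ofReal (W (shift ω) y) ∂(M ω x)
        ≤ ENNReal.ofReal Δ1 * ∫⁻ y, ENNReal.ofReal (W (shift ω) y) ∂(M ω u))
    (εm εp : ℝ) (hεm : 0 < εm) (hεmp : εm ≤ εp)
    (ν : Measure E) [IsProbabilityMeasure ν]
    (hB2b : ∀ ω x, ∀ A : Set E, MeasurableSet A →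
        ENNReal.ofReal εm * ν A ≤ M ω x A ∧ M ω x A ≤ ENNReal.ofReal εp * ν A)
    (Δ2 : ℝ) (hΔ2 : 0 < Δ2)
    (hB2c : ∀ n : ℕ, 1 ≤ n → ∀ ω, ∀ σ₁ σ₂ : Measure E,
        IsProbabilityMeasure σ₁ → IsProbabilityMeasure σ₂ →
        QnMass M W n ω σ₁ ≤ ENNReal.ofReal Δ2 * QnMass M W n ω σ₂)
    (hB2d : ∀ n : ℕ, 1 ≤ n → ∀ ω, ∀ σ : Measure E, IsProbabilityMeasure σ →
        0 < QnMass M W n ω σ ∧ QnMass M W n ω σ < ∞)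
    -- the eigen-triple (η, h, λ) of Proposition 2
    (η : Env H → Measure E) (h : Env H → E → ℝ) (lam : Env H → ℝ)
    (hη : ∀ ω, IsProbabilityMeasure (η ω))
    (hhpos : ∀ ω x, 0 < h ω x)
    (hhmeas : Measurable (fun p : Env H × E => h p.1 p.2))
    (hlammeas : Measurable lam)
    (hlampos : ∀ ω, 0 < lam ω)
    (hlamdef : ∀ ω, lam ω = ∫ x, W ω x ∂(η ω))
    (heig1 : ∀ ω, ∀ A : Set E, MeasurableSet A →
        ((η ω).bind (Qk M W ω)) A = ENNReal.ofReal (lam ω) * η (shift ω) A)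
    (heig2 : ∀ ω x, ∫⁻ y, ENNReal.ofReal (h (shift ω) y) ∂(Qk M W ω x)
        = ENNReal.ofReal (lam ω * h ω x))
    (heig3 : ∀ ω, ∫ x, h ω x ∂(η ω) = 1) :
    ∀ ω : Env H, ∀ m₁ m₂ : ℕ, 1 ≤ m₁ → 1 ≤ m₂ → ∀ x : Fin m₁ → E,
      Adm W ω x →
      ∫⁻ u, ENNReal.ofReal (havg h (shift ω) u)
          ∂(ENNReal.ofReal (Wavg W ω x) • Mpart M W m₂ ω x)
        = ENNReal.ofReal (lam ω * havg h ω x) := by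
  intro ω m₁ m₂ hm₁ hm₂ x hx
  have hS : 0 < ∑ j, W ω (x j) := hx
  set S := ∑ j, W ω (x j) with hSdef
  have hSne : ENNReal.ofReal S ≠ 0 := (ENNReal.ofReal_pos.mpr hS).ne'
  have hStop : ENNReal.ofReal S ≠ ∞ := ENNReal.ofReal_ne_top
  have hhm : Measurable fun y => h (shift ω) y :=
    hhmeas.comp (measurable_const.prodMk measurable_id)
  -- per-particle eigen identity
  have key : ∀ j : Fin m₁, ENNReal.ofReal (W ω (x j)) *
      ∫⁻ y, ENNReal.ofReal (h (shift ω) y) ∂(M ω (x j))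
      = ENNReal.ofReal (lam ω * h ω (x j)) := by
    intro j
    have h2 := heig2 ω (x j)
    rwa [Qk, lintegral_smul_measure] at h2
  -- mixK is a probability measure
  have hmix_univ : mixK M W ω x Set.univ = 1 := by
    simp only [mixK, Measure.smul_apply, Measure.coe_finset_sum, Finset.sum_apply,
      smul_eq_mul, (fun j => (hMprob ω (x j)).measure_univ), mul_one]
    rw [← ENNReal.ofReal_sum_of_nonneg (fun j _ => hWnn ω (x j)), ← hSdef]
    exact ENNReal.inv_mul_cancel hSne hStop
  haveI : IsProbabilityMeasure (mixK M W ω x) := ⟨hmix_univ⟩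
  -- value of ∫ h d(mixK)
  have hT : ∫⁻ y, ENNReal.ofReal (h (shift ω) y) ∂(mixK M W ω x)
      = (ENNReal.ofReal S)⁻¹ * ∑ j, ENNReal.ofReal (lam ω * h ω (x j)) := by
    rw [mixK, lintegral_smul_measure, lintegral_finset_sum_measure, ← hSdef]
    congr 1
    refine Finset.sum_congr rfl fun j _ => ?_
    rw [lintegral_smul_measure, smul_eq_mul, key j]
  -- marginal identity
  have hmarg : ∀ i : Fin m₂,
      ∫⁻ u, ENNReal.ofReal (h (shift ω) (u i)) ∂(Mpart M W m₂ ω x)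
      = ∫⁻ y, ENNReal.ofReal (h (shift ω) y) ∂(mixK M W ω x) := by
    intro i
    rw [Mpart, ← lintegral_map hhm.ennreal_ofReal (measurable_pi_apply i),
      map_eval_pi_aux (fun _ : Fin m₂ => mixK M W ω x) i]
  have hm₂R : (0:ℝ) < (m₂ : ℝ) := by exact_mod_cast hm₂
  have hm₂ne : (m₂ : ℝ≥0∞) ≠ 0 := Nat.cast_ne_zero.mpr (by omega)
  have hm₂top : (m₂ : ℝ≥0∞) ≠ ∞ := ENNReal.natCast_ne_top m₂
  -- main integral over the product measure
  have hmain : ∫⁻ u, ENNReal.ofReal (havg h (shift ω) u) ∂(Mpart M W m₂ ω x)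
      = ∫⁻ y, ENNReal.ofReal (h (shift ω) y) ∂(mixK M W ω x) := by
    have hrw : ∀ u : Fin m₂ → E, ENNReal.ofReal (havg h (shift ω) u)
        = (∑ i, ENNReal.ofReal (h (shift ω) (u i))) * ((m₂ : ℝ≥0∞))⁻¹ := by
      intro u
      rw [havg, ENNReal.ofReal_div_of_pos hm₂R,
        ENNReal.ofReal_sum_of_nonneg (fun i _ => (hhpos _ _).le),
        ENNReal.ofReal_natCast, div_eq_mul_inv]
    simp_rw [hrw]
    have hfi : ∀ i : Fin m₂, Measurable fun u : Fin m₂ → E => ENNReal.ofReal (h (shift ω) (u i)) :=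
      fun i => (hhm.comp (measurable_pi_apply i)).ennreal_ofReal
    rw [lintegral_mul_const' _ _ (ENNReal.inv_ne_top.mpr hm₂ne),
      lintegral_finset_sum _ (fun i _ => hfi i)]
    simp_rw [hmarg]
    rw [Finset.sum_const, Finset.card_univ, Fintype.card_fin, nsmul_eq_mul]
    rw [mul_assoc]
    nth_rewrite 2 [mul_comm]
    rw [← mul_assoc, ENNReal.mul_inv_cancel hm₂ne hm₂top, one_mul]
  -- assemble
  rw [lintegral_smul_measure, hmain, hT]
  have hm₁R : (0:ℝ) < (m₁ : ℝ) := by exact_mod_cast hm₁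
  have hWavg : ENNReal.ofReal (Wavg W ω x) = ENNReal.ofReal S * ((m₁ : ℝ≥0∞))⁻¹ := by
    rw [Wavg, ← hSdef, ENNReal.ofReal_div_of_pos hm₁R, ENNReal.ofReal_natCast, div_eq_mul_inv]
  have hRHS : ENNReal.ofReal (lam ω * havg h ω x)
      = (∑ j, ENNReal.ofReal (lam ω * h ω (x j))) * ((m₁ : ℝ≥0∞))⁻¹ := by
    rw [havg, ← mul_div_assoc, ENNReal.ofReal_div_of_pos hm₁R, ENNReal.ofReal_natCast,
      div_eq_mul_inv, Finset.mul_sum, ENNReal.ofReal_sum_of_nonneg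
        (fun j _ => mul_nonneg (hlampos ω).le (hhpos ω (x j)).le)]
  rw [hWavg, hRHS]
  calc ENNReal.ofReal S * ((m₁:ℝ≥0∞))⁻¹ *
        ((ENNReal.ofReal S)⁻¹ * ∑ j, ENNReal.ofReal (lam ω * h ω (x j)))
      = (ENNReal.ofReal S * (ENNReal.ofReal S)⁻¹) *
        ((∑ j, ENNReal.ofReal (lam ω * h ω (x j))) * ((m₁:ℝ≥0∞))⁻¹) := by ring
    _ = (∑ j, ENNReal.ofReal (lam ω * h ω (x j))) * ((m₁:ℝ≥0∞))⁻¹ := by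
        rw [ENNReal.mul_inv_cancel hSne hStop, one_mul]


end
end

section
/- Assume (B2) and let h : Ω×E → (0,∞) be measurable with 0 < h_- := inf_{(ω,x)} h(ω,x) ≤ sup_{(ω,x)} h(ω,x) =: h_+ < ∞ (as holds for the eigenfunction of Proposition 2 by its part 3). Fix integers m₁, m₂ ≥ 1 and define, for admissible (ω,x) ∈ Ω×E^{m₁}, the h-twisted particle kernel M̃(ω,x,D) = [∫_D 𝐌^{m₁,m₂}(ω,x,dx')·𝐡^{m₂}(zω,x')] / [∫_{E^{m₂}} 𝐌^{m₁,m₂}(ω,x,du)·𝐡^{m₂}(zω,u)] for measurable D ⊆ E^{m₂}, where 𝐡^{m₂}(ω,x) = (1/m₂)Σ_{j=1}^{m₂}h(ω,x^j). Then M̃ belongs to the class 𝕄^{m₁,m₂}: taking ν̃ = ν^{⊗m₂}, one has ε̃_-·ν̃(·) ≤ M̃(ω,x,·) ≤ ε̃_+·ν̃(·) for all admissible (ω,x) with ε̃_- = ε_-^{m₂}h_- /(ε_+^{m₂}h_+) and ε̃_+ = ε_+^{m₂}h_+/(ε_-^{m₂}h_-); moreover ν^{⊗m₂} ≪ ν̃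 and ∫(dν^{⊗m₂}/dν̃)²dν̃ = 1 < ∞. -/
open MeasureTheory ENNReal Filter Topology

noncomputable section

variable {H E : Type*} [MeasurableSpace H] [MeasurableSpace E]

/-- The `h`-twisted particle kernel
`M̃(ω,x,D) = [∫_D 𝐌^{m₁,m₂}(ω,x,dx')·𝐡^{m₂}(zω,x')] / [∫ 𝐌^{m₁,m₂}(ω,x,du)·𝐡^{m₂}(zω,u)]`. -/
def Mtw (M : Env H → E → Measure E) (W : Env H → E → ℝ) (h : Env H → E → ℝ)
    (m₂ : ℕ) (ω : Env H) {m₁ : ℕ} (x : Fin m₁ → E) : Measure (Fin m₂ → E) :=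
  (∫⁻ u, ENNReal.ofReal (havg h (shift ω) u) ∂(Mpart M W m₂ ω x))⁻¹ •
    (Mpart M W m₂ ω x).withDensity fun x' => ENNReal.ofReal (havg h (shift ω) x')


lemma myProdMono {α β : Type*} [MeasurableSpace α] [MeasurableSpace β]
    {μ₁ μ₂ : Measure α} {ν₁ ν₂ : Measure β}
    [SFinite μ₁] [SFinite ν₁] [SFinite μ₂] [SFinite ν₂]
    (h1 : μ₁ ≤ μ₂) (h2 : ν₁ ≤ ν₂) : μ₁.prod ν₁ ≤ μ₂.prod ν₂ := by
  rw [Measure.le_iff]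
  intro s hs
  rw [Measure.prod_apply hs, Measure.prod_apply hs]
  calc ∫⁻ x, ν₁ (Prod.mk x ⁻¹' s) ∂μ₁
      ≤ ∫⁻ x, ν₂ (Prod.mk x ⁻¹' s) ∂μ₁ :=
        lintegral_mono fun x => Measure.le_iff'.mp h2 _
    _ ≤ ∫⁻ x, ν₂ (Prod.mk x ⁻¹' s) ∂μ₂ := lintegral_mono' h1 le_rfl

lemma myPiMono {E : Type*} [MeasurableSpace E] {μ ν : Measure E}
    [IsFiniteMeasure μ] [IsFiniteMeasure ν] (hle : μ ≤ ν) (m : ℕ) :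
    (Measure.pi fun _ : Fin m => μ) ≤ Measure.pi fun _ : Fin m => ν := by
  induction m with
  | zero => rw [Measure.pi_of_empty, Measure.pi_of_empty]
  | succ n ih =>
      have h1 := ((measurePreserving_piFinSuccAbove
        (fun _ : Fin (n + 1) => μ) 0).symm _).map_eq
      have h2 := ((measurePreserving_piFinSuccAbove
        (fun _ : Fin (n + 1) => ν) 0).symm _).map_eq
      rw [← h1, ← h2]
      exact Measure.map_mono (myProdMono hle ih)
        (MeasurableEquiv.piFinSuccAbove (fun _ : Fin (n + 1) => E) 0).symm.measurable

lemma myPiSmul {E : Type*} [MeasurableSpace E] (c : ℝ≥0∞) (hc : c ≠ ∞)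
    (ν : Measure E) [IsFiniteMeasure ν] (m : ℕ) :
    (Measure.pi fun _ : Fin m => c • ν) = c ^ m • Measure.pi (fun _ : Fin m => ν) := by
  haveI : IsFiniteMeasure (c • ν) :=
    ⟨by rw [Measure.smul_apply, smul_eq_mul]; exact ENNReal.mul_lt_top hc.lt_top (measure_lt_top _ _)⟩
  refine Measure.pi_eq fun s hs => ?_
  rw [Measure.smul_apply, Measure.pi_pi, smul_eq_mul]
  simp only [Measure.smul_apply, smul_eq_mul]
  rw [Finset.prod_mul_distrib, Finset.prod_const, Finset.card_univ, Fintype.card_fin]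


/-- **The twisted kernel belongs to the class `𝕄^{m₁,m₂}`.** Assume (B2) and let
`h` be measurable with `0 < h₋ ≤ h ≤ h₊ < ∞`. Then the `h`-twisted particle kernel
satisfies the class bounds with `ν̃ = ν^{⊗m₂}`,
`ε̃₋ = ε₋^{m₂}h₋/(ε₊^{m₂}h₊)` and `ε̃₊ = ε₊^{m₂}h₊/(ε₋^{m₂}h₋)`; moreover
`ν^{⊗m₂} ≪ ν̃` and `∫(dν^{⊗m₂}/dν̃)²dν̃ = 1 < ∞`. -/
theorem twisted_kernel_in_class
    (M : Env H → E → Measure E) (W : Env H → E → ℝ)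
    (hMprob : ∀ ω x, IsProbabilityMeasure (M ω x))
    (hMmeas : Measurable fun p : Env H × E => M p.1 p.2)
    (hWmeas : Measurable fun p : Env H × E => W p.1 p.2)
    (hWnn : ∀ ω x, 0 ≤ W ω x)
    (m₁ m₂ : ℕ) (hm₁ : 1 ≤ m₁) (hm₂ : 1 ≤ m₂)
    -- (B2), minorisation/majorisation part
    (εm εp : ℝ) (hεm : 0 < εm) (hεmp : εm ≤ εp)
    (ν : Measure E) [IsProbabilityMeasure ν]
    (hB2b : ∀ ω x, ∀ A : Set E, MeasurableSet A →
        ENNReal.ofReal εm * ν A ≤ M ω x A ∧ M ω x A ≤ ENNReal.ofReal εp * ν A)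
    -- h: a positive, bounded measurable function
    (h : Env H → E → ℝ)
    (hhmeas : Measurable (fun p : Env H × E => h p.1 p.2))
    (hm hp : ℝ) (hhm : 0 < hm) (hhmp : hm ≤ hp)
    (hhbd : ∀ ω x, hm ≤ h ω x ∧ h ω x ≤ hp) :
    (∀ ω : Env H, ∀ x : Fin m₁ → E, Adm W ω x →
      ∀ D : Set (Fin m₂ → E), MeasurableSet D →
        ENNReal.ofReal (εm ^ m₂ * hm / (εp ^ m₂ * hp)) *
            (Measure.pi fun _ : Fin m₂ => ν) D
          ≤ Mtw M W h m₂ ω x D ∧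
        Mtw M W h m₂ ω x D
          ≤ ENNReal.ofReal (εp ^ m₂ * hp / (εm ^ m₂ * hm)) *
              (Measure.pi fun _ : Fin m₂ => ν) D) ∧
    (Measure.pi fun _ : Fin m₂ => ν) ≪ (Measure.pi fun _ : Fin m₂ => ν) ∧
    ∫⁻ x', ((Measure.pi fun _ : Fin m₂ => ν).rnDeriv
        (Measure.pi fun _ : Fin m₂ => ν) x') ^ 2
      ∂(Measure.pi fun _ : Fin m₂ => ν) = 1 := by
  classical
  haveI : IsProbabilityMeasure (Measure.pi fun _ : Fin m₂ => ν) := inferInstance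
  refine ⟨?_, Measure.AbsolutelyContinuous.rfl, ?_⟩
  · intro ω x hx D hD
    set S := ∑ j, W ω (x j) with hSdef
    have hOS : ENNReal.ofReal S ≠ 0 := (ENNReal.ofReal_pos.mpr hx).ne'
    have hsum : ∑ j, ENNReal.ofReal (W ω (x j)) = ENNReal.ofReal S :=
      (ENNReal.ofReal_sum_of_nonneg fun j _ => hWnn ω (x j)).symm
    have hmixA : ∀ A : Set E, mixK M W ω x A =
        (ENNReal.ofReal S)⁻¹ * ∑ j, ENNReal.ofReal (W ω (x j)) * M ω (x j) A := by
      intro A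
      rw [mixK, Measure.smul_apply, smul_eq_mul, Measure.finset_sum_apply]
      simp only [Measure.smul_apply, smul_eq_mul]
      rfl
    haveI hmixP : IsProbabilityMeasure (mixK M W ω x) := by
      constructor
      rw [hmixA]
      simp only [measure_univ, mul_one, hsum]
      exact ENNReal.inv_mul_cancel hOS ENNReal.ofReal_ne_top
    have hup : mixK M W ω x ≤ ENNReal.ofReal εp • ν := by
      rw [Measure.le_iff]
      intro A hA
      rw [hmixA, Measure.smul_apply, smul_eq_mul]
      calc (ENNReal.ofReal S)⁻¹ * ∑ j, ENNReal.ofReal (W ω (x j)) * M ω (x j) A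
          ≤ (ENNReal.ofReal S)⁻¹ *
              ∑ j, ENNReal.ofReal (W ω (x j)) * (ENNReal.ofReal εp * ν A) :=
            mul_le_mul_right (Finset.sum_le_sum fun j _ =>
              mul_le_mul_right (hB2b ω (x j) A hA).2 _) _
        _ = (ENNReal.ofReal S)⁻¹ * (ENNReal.ofReal S * (ENNReal.ofReal εp * ν A)) := by
            rw [← Finset.sum_mul, hsum]
        _ = ENNReal.ofReal εp * ν A := by
            rw [← mul_assoc, ENNReal.inv_mul_cancel hOS ENNReal.ofReal_ne_top, one_mul]
    have hlo : ENNReal.ofReal εm • ν ≤ mixK M W ω x := by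
      rw [Measure.le_iff]
      intro A hA
      rw [hmixA, Measure.smul_apply, smul_eq_mul]
      calc ENNReal.ofReal εm * ν A
          = (ENNReal.ofReal S)⁻¹ * (ENNReal.ofReal S * (ENNReal.ofReal εm * ν A)) := by
            rw [← mul_assoc, ENNReal.inv_mul_cancel hOS ENNReal.ofReal_ne_top, one_mul]
        _ = (ENNReal.ofReal S)⁻¹ *
              ∑ j, ENNReal.ofReal (W ω (x j)) * (ENNReal.ofReal εm * ν A) := by
            rw [← Finset.sum_mul, hsum]
        _ ≤ (ENNReal.ofReal S)⁻¹ * ∑ j, ENNReal.ofReal (W ω (x j)) * M ω (x j) A :=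
            mul_le_mul_right (Finset.sum_le_sum fun j _ =>
              mul_le_mul_right (hB2b ω (x j) A hA).1 _) _
    haveI : IsFiniteMeasure (ENNReal.ofReal εp • ν) :=
      ⟨by rw [Measure.smul_apply, smul_eq_mul, measure_univ, mul_one]
          exact ENNReal.ofReal_lt_top⟩
    haveI : IsFiniteMeasure (ENNReal.ofReal εm • ν) :=
      ⟨by rw [Measure.smul_apply, smul_eq_mul, measure_univ, mul_one]
          exact ENNReal.ofReal_lt_top⟩
    haveI hMpP : IsProbabilityMeasure (Mpart M W m₂ ω x) := by
      rw [Mpart]; infer_instance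
    have hMpUp : Mpart M W m₂ ω x D ≤
        ENNReal.ofReal εp ^ m₂ * (Measure.pi fun _ : Fin m₂ => ν) D := by
      calc Mpart M W m₂ ω x D
          ≤ (Measure.pi fun _ : Fin m₂ => ENNReal.ofReal εp • ν) D :=
            Measure.le_iff'.mp (myPiMono hup m₂) D
        _ = ENNReal.ofReal εp ^ m₂ * (Measure.pi fun _ : Fin m₂ => ν) D := by
            rw [myPiSmul _ ENNReal.ofReal_ne_top, Measure.smul_apply, smul_eq_mul]
    have hMpLo : ENNReal.ofReal εm ^ m₂ * (Measure.pi fun _ : Fin m₂ => ν) D ≤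
        Mpart M W m₂ ω x D := by
      calc ENNReal.ofReal εm ^ m₂ * (Measure.pi fun _ : Fin m₂ => ν) D
          = (Measure.pi fun _ : Fin m₂ => ENNReal.ofReal εm • ν) D := by
            rw [myPiSmul _ ENNReal.ofReal_ne_top, Measure.smul_apply, smul_eq_mul]
        _ ≤ Mpart M W m₂ ω x D := Measure.le_iff'.mp (myPiMono hlo m₂) D
    -- bounds on havg
    have hm₂R : (0 : ℝ) < (m₂ : ℝ) := by exact_mod_cast hm₂
    have hhavgR : ∀ u : Fin m₂ → E, hm ≤ havg h (shift ω) u ∧ havg h (shift ω) u ≤ hp := by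
      intro u
      constructor
      · rw [havg, le_div_iff₀ hm₂R]
        calc hm * (m₂ : ℝ) = ∑ _j : Fin m₂, hm := by
              rw [Finset.sum_const, Finset.card_univ, Fintype.card_fin, nsmul_eq_mul, mul_comm]
          _ ≤ ∑ j, h (shift ω) (u j) :=
              Finset.sum_le_sum fun j _ => (hhbd (shift ω) (u j)).1
      · rw [havg, div_le_iff₀ hm₂R]
        calc ∑ j, h (shift ω) (u j) ≤ ∑ _j : Fin m₂, hp :=
              Finset.sum_le_sum fun j _ => (hhbd (shift ω) (u j)).2
          _ = hp * (m₂ : ℝ) := by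
              rw [Finset.sum_const, Finset.card_univ, Fintype.card_fin, nsmul_eq_mul, mul_comm]
    have hhavgLo : ∀ u : Fin m₂ → E,
        ENNReal.ofReal hm ≤ ENNReal.ofReal (havg h (shift ω) u) :=
      fun u => ENNReal.ofReal_le_ofReal (hhavgR u).1
    have hhavgUp : ∀ u : Fin m₂ → E,
        ENNReal.ofReal (havg h (shift ω) u) ≤ ENNReal.ofReal hp :=
      fun u => ENNReal.ofReal_le_ofReal (hhavgR u).2
    set c := ∫⁻ u, ENNReal.ofReal (havg h (shift ω) u) ∂(Mpart M W m₂ ω x) with hcdef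
    have hcUp : c ≤ ENNReal.ofReal hp := by
      calc c ≤ ∫⁻ _u, ENNReal.ofReal hp ∂(Mpart M W m₂ ω x) :=
            lintegral_mono fun u => hhavgUp u
        _ = ENNReal.ofReal hp := by rw [lintegral_const, measure_univ, mul_one]
    have hcLo : ENNReal.ofReal hm ≤ c := by
      calc ENNReal.ofReal hm
          = ∫⁻ _u, ENNReal.ofReal hm ∂(Mpart M W m₂ ω x) := by
            rw [lintegral_const, measure_univ, mul_one]
        _ ≤ c := lintegral_mono fun u => hhavgLo u
    have hwd : (Mpart M W m₂ ω x).withDensity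
        (fun x' => ENNReal.ofReal (havg h (shift ω) x')) D =
        ∫⁻ u in D, ENNReal.ofReal (havg h (shift ω) u) ∂(Mpart M W m₂ ω x) :=
      withDensity_apply _ hD
    have hwdUp : ∫⁻ u in D, ENNReal.ofReal (havg h (shift ω) u) ∂(Mpart M W m₂ ω x)
        ≤ ENNReal.ofReal hp * Mpart M W m₂ ω x D := by
      calc ∫⁻ u in D, ENNReal.ofReal (havg h (shift ω) u) ∂(Mpart M W m₂ ω x)
          ≤ ∫⁻ _u in D, ENNReal.ofReal hp ∂(Mpart M W m₂ ω x) :=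
            lintegral_mono fun u => hhavgUp u
        _ = ENNReal.ofReal hp * Mpart M W m₂ ω x D := by
            rw [setLIntegral_const]
    have hwdLo : ENNReal.ofReal hm * Mpart M W m₂ ω x D ≤
        ∫⁻ u in D, ENNReal.ofReal (havg h (shift ω) u) ∂(Mpart M W m₂ ω x) := by
      calc ENNReal.ofReal hm * Mpart M W m₂ ω x D
          = ∫⁻ _u in D, ENNReal.ofReal hm ∂(Mpart M W m₂ ω x) := by
            rw [setLIntegral_const]
        _ ≤ ∫⁻ u in D, ENNReal.ofReal (havg h (shift ω) u) ∂(Mpart M W m₂ ω x) :=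
            lintegral_mono fun u => hhavgLo u
    have hMtwD : Mtw M W h m₂ ω x D = c⁻¹ *
        (Mpart M W m₂ ω x).withDensity
          (fun x' => ENNReal.ofReal (havg h (shift ω) x')) D := by
      rw [Mtw, Measure.smul_apply, smul_eq_mul, hcdef]
    -- εm ≤ 1 ≤ εp
    have j0 : Fin m₁ := ⟨0, hm₁⟩
    have hεp1 : 1 ≤ εp := by
      have := (hB2b ω (x j0) Set.univ MeasurableSet.univ).2
      rw [measure_univ, measure_univ, mul_one] at this
      exact ENNReal.one_le_ofReal.mp this
    have hεm1 : εm ≤ 1 := by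
      have := (hB2b ω (x j0) Set.univ MeasurableSet.univ).1
      rw [measure_univ, measure_univ, mul_one] at this
      exact ENNReal.ofReal_le_one.mp this
    have hp0 : (0 : ℝ) < hp := lt_of_lt_of_le hhm hhmp
    have hεp0 : (0 : ℝ) < εp := lt_of_lt_of_le hεm hεmp
    constructor
    · -- lower bound
      have hcoef : ENNReal.ofReal (εm ^ m₂ * hm / (εp ^ m₂ * hp)) ≤
          (ENNReal.ofReal hp)⁻¹ * (ENNReal.ofReal hm * ENNReal.ofReal εm ^ m₂) := by
        rw [← ENNReal.ofReal_inv_of_pos hp0, ← ENNReal.ofReal_pow hεm.le,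
          ← ENNReal.ofReal_mul hhm.le, ← ENNReal.ofReal_mul (by positivity)]
        apply ENNReal.ofReal_le_ofReal
        have h1 : εm ^ m₂ * hm / (εp ^ m₂ * hp) ≤ εm ^ m₂ * hm / (1 * hp) := by
          gcongr
          exact one_le_pow₀ hεp1
        calc εm ^ m₂ * hm / (εp ^ m₂ * hp) ≤ εm ^ m₂ * hm / (1 * hp) := h1
          _ = hp⁻¹ * (hm * εm ^ m₂) := by rw [one_mul, div_eq_mul_inv]; ring
      calc ENNReal.ofReal (εm ^ m₂ * hm / (εp ^ m₂ * hp)) *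
            (Measure.pi fun _ : Fin m₂ => ν) D
          ≤ (ENNReal.ofReal hp)⁻¹ * (ENNReal.ofReal hm * ENNReal.ofReal εm ^ m₂) *
              (Measure.pi fun _ : Fin m₂ => ν) D := mul_le_mul_left hcoef _
        _ = (ENNReal.ofReal hp)⁻¹ * (ENNReal.ofReal hm *
              (ENNReal.ofReal εm ^ m₂ * (Measure.pi fun _ : Fin m₂ => ν) D)) := by ring
        _ ≤ (ENNReal.ofReal hp)⁻¹ * (ENNReal.ofReal hm * Mpart M W m₂ ω x D) :=
            mul_le_mul_right (mul_le_mul_right hMpLo _) _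
        _ ≤ c⁻¹ * (ENNReal.ofReal hm * Mpart M W m₂ ω x D) :=
            mul_le_mul_left (ENNReal.inv_le_inv' hcUp) _
        _ ≤ c⁻¹ * ∫⁻ u in D, ENNReal.ofReal (havg h (shift ω) u) ∂(Mpart M W m₂ ω x) :=
            mul_le_mul_right hwdLo _
        _ = Mtw M W h m₂ ω x D := by rw [hMtwD, hwd]
    · -- upper bound
      have hcoef : (ENNReal.ofReal hm)⁻¹ * (ENNReal.ofReal hp * ENNReal.ofReal εp ^ m₂) ≤
          ENNReal.ofReal (εp ^ m₂ * hp / (εm ^ m₂ * hm)) := by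
        rw [← ENNReal.ofReal_inv_of_pos hhm, ← ENNReal.ofReal_pow hεp0.le,
          ← ENNReal.ofReal_mul hp0.le, ← ENNReal.ofReal_mul (by positivity)]
        apply ENNReal.ofReal_le_ofReal
        have h1 : εp ^ m₂ * hp / (1 * hm) ≤ εp ^ m₂ * hp / (εm ^ m₂ * hm) := by
          gcongr
          exact pow_le_one₀ hεm.le hεm1
        calc hm⁻¹ * (hp * εp ^ m₂) = εp ^ m₂ * hp / (1 * hm) := by
              rw [one_mul, div_eq_mul_inv]; ring
          _ ≤ εp ^ m₂ * hp / (εm ^ m₂ * hm) := h1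
      calc Mtw M W h m₂ ω x D
          = c⁻¹ * ∫⁻ u in D, ENNReal.ofReal (havg h (shift ω) u) ∂(Mpart M W m₂ ω x) := by
            rw [hMtwD, hwd]
        _ ≤ c⁻¹ * (ENNReal.ofReal hp * Mpart M W m₂ ω x D) := mul_le_mul_right hwdUp _
        _ ≤ (ENNReal.ofReal hm)⁻¹ * (ENNReal.ofReal hp * Mpart M W m₂ ω x D) :=
            mul_le_mul_left (ENNReal.inv_le_inv' hcLo) _
        _ ≤ (ENNReal.ofReal hm)⁻¹ * (ENNReal.ofReal hp *
              (ENNReal.ofReal εp ^ m₂ * (Measure.pi fun _ : Fin m₂ => ν) D)) :=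
            mul_le_mul_right (mul_le_mul_right hMpUp _) _
        _ = (ENNReal.ofReal hm)⁻¹ * (ENNReal.ofReal hp * ENNReal.ofReal εp ^ m₂) *
              (Measure.pi fun _ : Fin m₂ => ν) D := by ring
        _ ≤ ENNReal.ofReal (εp ^ m₂ * hp / (εm ^ m₂ * hm)) *
              (Measure.pi fun _ : Fin m₂ => ν) D := mul_le_mul_left hcoef _
  · have hrn := Measure.rnDeriv_self (Measure.pi fun _ : Fin m₂ => ν)
    calc ∫⁻ x', ((Measure.pi fun _ : Fin m₂ => ν).rnDeriv
          (Measure.pi fun _ : Fin m₂ => ν) x') ^ 2 ∂(Measure.pi fun _ : Fin m₂ => ν)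
        = ∫⁻ _x', 1 ∂(Measure.pi fun _ : Fin m₂ => ν) :=
          lintegral_congr_ae (hrn.mono fun x hx => by simp [hx])
      _ = 1 := by rw [lintegral_one, measure_univ]


end
end
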